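/- Let d ≥ 2 and let φ be a polynomial with Gegenbauer expansion φ = Σ_{l=0}^k φ̂_l P_l. Then Σ_{l=0}^k φ̂_l² l(l+d−2) = (Γ(d/2)/Γ((d−1)/2)) √(d/π) ∫_{−√d}^{√d} φ'(t)² (1 − t²/d)^{(d−1)/2} dt ≤ 2√(d(d−1)) · E[φ'(Z)² | Z ~ N(0,1)]. -/

import Mathlib

open MeasureTheory

noncomputable section

/-- `đ_l`, the dimension of the space of degree-`l` harmonic homogeneous polynomials in
`d` variables. -/
def harmDim (d l : ℕ) : ℕ := (d + l - 1).choose (d - 1) - (d + l - 3).choose (d - 1)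

/-- The density `ξ` of a single coordinate of a uniform point of `√d S^{d−1}`. -/
def xiDensity (d : ℕ) (t : ℝ) : ℝ :=
  Real.Gamma ((d : ℝ) / 2) / (Real.Gamma (((d : ℝ) - 1) / 2) * Real.sqrt (Real.pi * d)) *
    (1 - t ^ 2 / d) ^ (((d : ℝ) - 3) / 2)

/-- `P` is the family of Gegenbauer polynomials for dimension `d`: `P l` has degree `l`,
the family is orthonormal with respect to `ξ` on `[−√d, √d]`, and `P l (√d) = √đ_l`. -/
def IsGegenbauer (d : ℕ) (P : ℕ → Polynomial ℝ) : Prop :=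
  (∀ l, (P l).natDegree = l) ∧
  (∀ l l', (∫ t in -Real.sqrt d..Real.sqrt d, (P l).eval t * (P l').eval t * xiDensity d t)
    = if l = l' then 1 else 0) ∧
  (∀ l, (P l).eval (Real.sqrt d) = Real.sqrt (harmDim d l))

namespace GegAux
open Polynomial
open scoped ENNReal NNReal


def Wf (d : ℕ) (t : ℝ) : ℝ := (1 - t^2/d) ^ (((d:ℝ)-1)/2)
def wf (d : ℕ) (t : ℝ) : ℝ := (1 - t^2/d) ^ (((d:ℝ)-3)/2)
def cxi (d : ℕ) : ℝ :=
  Real.Gamma ((d:ℝ)/2) / (Real.Gamma (((d:ℝ)-1)/2) * Real.sqrt (Real.pi * d))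

variable {d : ℕ}

lemma hd0 (hd : 2 ≤ d) : (0:ℝ) < d := by
  have : (2:ℝ) ≤ d := by exact_mod_cast hd
  linarith

lemma hs0 (hd : 2 ≤ d) : (0:ℝ) < Real.sqrt d := Real.sqrt_pos.mpr (hd0 hd)

lemma cxi_pos (hd : 2 ≤ d) : 0 < cxi d := by
  have h2 : (2:ℝ) ≤ d := by exact_mod_cast hd
  apply div_pos (Real.Gamma_pos_of_pos (by linarith))
  exact mul_pos (Real.Gamma_pos_of_pos (by linarith))
    (Real.sqrt_pos.mpr (by positivity))

lemma base_pos (hd : 2 ≤ d) {t : ℝ} (ht : t ∈ Set.Ioo (-Real.sqrt d) (Real.sqrt d)) :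
    0 < 1 - t^2/d := by
  have h1 : t^2 < d := by
    have := abs_lt.mpr ⟨ht.1, ht.2⟩
    calc t^2 = |t|^2 := (sq_abs t).symm
    _ < Real.sqrt d ^ 2 := by
        apply pow_lt_pow_left₀ this (abs_nonneg t)
        norm_num
    _ = d := Real.sq_sqrt (hd0 hd).le
  have := hd0 hd
  rw [sub_pos, div_lt_one this]
  exact h1

lemma base_mem (hd : 2 ≤ d) {t : ℝ} (ht : t ∈ Set.Icc (-Real.sqrt d) (Real.sqrt d)) :
    0 ≤ 1 - t^2/d ∧ 1 - t^2/d ≤ 1 := by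
  have h1 : t^2 ≤ d := by
    have := abs_le.mpr ⟨ht.1, ht.2⟩
    calc t^2 = |t|^2 := (sq_abs t).symm
    _ ≤ Real.sqrt d ^ 2 := by
        apply pow_le_pow_left₀ (abs_nonneg t) this
    _ = d := Real.sq_sqrt (hd0 hd).le
  have hd' := hd0 hd
  constructor
  · rw [sub_nonneg, div_le_one hd']; exact h1
  · have : 0 ≤ t^2/d := by positivity
    linarith

lemma Wf_nonneg (hd : 2 ≤ d) {t : ℝ} (ht : t ∈ Set.Icc (-Real.sqrt d) (Real.sqrt d)) :
    0 ≤ Wf d t := Real.rpow_nonneg (base_mem hd ht).1 _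

lemma wf_nonneg (hd : 2 ≤ d) {t : ℝ} (ht : t ∈ Set.Icc (-Real.sqrt d) (Real.sqrt d)) :
    0 ≤ wf d t := Real.rpow_nonneg (base_mem hd ht).1 _

lemma Wf_le_wf (hd : 2 ≤ d) {t : ℝ} (ht : t ∈ Set.Icc (-Real.sqrt d) (Real.sqrt d)) :
    Wf d t ≤ wf d t := by
  obtain ⟨h0, h1⟩ := base_mem hd ht
  rcases eq_or_lt_of_le h0 with h | h
  · have h2 : (2:ℝ) ≤ d := by exact_mod_cast hd
    have hW : Wf d t = 0 := by
      rw [Wf, ← h]; exact Real.zero_rpow (by intro hc; simp at hc; linarith)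
    rw [hW]; exact wf_nonneg hd ht
  · exact Real.rpow_le_rpow_of_exponent_ge h h1 (by linarith [ (by exact_mod_cast hd : (2:ℝ) ≤ d) ])

lemma Wf_endpoint (hd : 2 ≤ d) {t : ℝ} (ht : t^2 = d) : Wf d t = 0 := by
  have h2 : (2:ℝ) ≤ d := by exact_mod_cast hd
  have : 1 - t^2/d = 0 := by rw [ht]; field_simp; norm_num
  rw [Wf, this]
  exact Real.zero_rpow (by intro hc; simp at hc; linarith)

lemma continuous_Wf (hd : 2 ≤ d) : Continuous (Wf d) := by
  have h2 : (2:ℝ) ≤ d := by exact_mod_cast hd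
  rw [continuous_iff_continuousAt]
  intro t
  have hbase : Continuous fun t : ℝ => 1 - t^2/d := by continuity
  exact (Real.continuousAt_rpow_const _ _ (Or.inr (by linarith))).comp hbase.continuousAt

lemma measurable_wf : Measurable (wf d) := by
  have hbase : Measurable fun t : ℝ => 1 - t^2/d := by measurability
  exact hbase.pow_const _

lemma measurable_Wf : Measurable (Wf d) := by
  have hbase : Measurable fun t : ℝ => 1 - t^2/d := by measurability
  exact hbase.pow_const _


-- ============ part 2: uses hP ============

lemma xiDensity_eq2 (d : ℕ) (t : ℝ) : xiDensity d t = cxi d * wf d t := rfl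

lemma measurable_xiDensity : Measurable (xiDensity d) := (measurable_wf.const_mul _)

lemma xiDensity_nonneg (hd : 2 ≤ d) {t : ℝ} (ht : t ∈ Set.Icc (-Real.sqrt d) (Real.sqrt d)) :
    0 ≤ xiDensity d t := by
  rw [xiDensity_eq2]
  exact mul_nonneg (cxi_pos hd).le (wf_nonneg hd ht)

variable {P : ℕ → Polynomial ℝ}

lemma P_zero (hd : 2 ≤ d) (hP : IsGegenbauer d P) : P 0 = 1 := by
  have h1 : P 0 = C ((P 0).coeff 0) := (Polynomial.eq_C_of_natDegree_eq_zero (hP.1 0))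
  have h2 := hP.2.2 0
  have h3 : harmDim d 0 = 1 := by
    unfold harmDim
    have : d + 0 - 3 < d - 1 := by omega
    rw [Nat.choose_eq_zero_of_lt this]
    simp [Nat.choose_self]
  rw [h3] at h2
  simp only [Nat.cast_one, Real.sqrt_one] at h2
  rw [h1] at h2 ⊢
  simp only [Polynomial.eval_C] at h2
  rw [h2]; simp

lemma xi_int (hd : 2 ≤ d) (hP : IsGegenbauer d P) :
    IntervalIntegrable (xiDensity d) volume (-Real.sqrt d) (Real.sqrt d) := by
  have h := hP.2.1 0 0
  simp only [P_zero hd hP, Polynomial.eval_one, one_mul, if_pos rfl] at h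
  by_contra hc
  rw [intervalIntegral.integral_undef hc] at h
  norm_num at h

lemma cont_mul_xi_int (hd : 2 ≤ d) (hP : IsGegenbauer d P) {g : ℝ → ℝ} (hg : Continuous g) :
    IntervalIntegrable (fun t => g t * xiDensity d t) volume (-Real.sqrt d) (Real.sqrt d) := by
  obtain ⟨C, hC⟩ := (isCompact_uIcc (a := -Real.sqrt d) (b := Real.sqrt d)).exists_bound_of_continuousOn
    hg.continuousOn
  refine ((xi_int hd hP).const_mul C).mono_fun ?_ ?_
  · exact (hg.aestronglyMeasurable.mul (measurable_xiDensity (d := d)).aestronglyMeasurable).restrict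
  · filter_upwards [ae_restrict_mem measurableSet_uIoc] with t ht
    have ht' : t ∈ Set.Icc (-Real.sqrt d) (Real.sqrt d) := by
      have : Set.uIoc (-Real.sqrt d) (Real.sqrt d) ⊆ Set.uIcc (-Real.sqrt d) (Real.sqrt d) :=
        Set.uIoc_subset_uIcc
      have h2 := this ht
      rwa [Set.uIcc_of_le (by linarith [hs0 hd])] at h2
    have hxi : 0 ≤ xiDensity d t := xiDensity_nonneg hd ht'
    calc ‖g t * xiDensity d t‖ = |g t| * xiDensity d t := by
          rw [norm_mul, Real.norm_eq_abs, Real.norm_eq_abs, abs_of_nonneg hxi]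
    _ ≤ C * xiDensity d t := by
        apply mul_le_mul_of_nonneg_right _ hxi
        have := hC t (by
          rw [Set.uIcc_of_le (by linarith [hs0 hd])]; exact ht')
        rwa [Real.norm_eq_abs] at this
    _ ≤ ‖C * xiDensity d t‖ := le_abs_self _

lemma cont_mul_wf_int (hd : 2 ≤ d) (hP : IsGegenbauer d P) {g : ℝ → ℝ} (hg : Continuous g) :
    IntervalIntegrable (fun t => g t * wf d t) volume (-Real.sqrt d) (Real.sqrt d) := by
  have h := cont_mul_xi_int hd hP (g := fun t => g t / cxi d) (hg.div_const _)
  have hc := cxi_pos hd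
  convert h using 2 with t
  rw [xiDensity_eq2]
  field_simp

lemma cont_mul_Wf_int (hd : 2 ≤ d) (hP : IsGegenbauer d P) {g : ℝ → ℝ} (hg : Continuous g) :
    IntervalIntegrable (fun t => g t * Wf d t) volume (-Real.sqrt d) (Real.sqrt d) := by
  obtain ⟨C, hC⟩ := (isCompact_uIcc (a := -Real.sqrt d) (b := Real.sqrt d)).exists_bound_of_continuousOn
    hg.continuousOn
  refine (cont_mul_wf_int hd hP (g := fun _ => C) continuous_const).mono_fun ?_ ?_
  · exact (hg.aestronglyMeasurable.mul (measurable_Wf (d := d)).aestronglyMeasurable).restrict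
  · filter_upwards [ae_restrict_mem measurableSet_uIoc] with t ht
    have ht' : t ∈ Set.Icc (-Real.sqrt d) (Real.sqrt d) := by
      have h2 := Set.uIoc_subset_uIcc ht
      rwa [Set.uIcc_of_le (by linarith [hs0 hd])] at h2
    calc ‖g t * Wf d t‖ = |g t| * Wf d t := by
          rw [norm_mul, Real.norm_eq_abs, Real.norm_eq_abs, abs_of_nonneg (Wf_nonneg hd ht')]
    _ ≤ C * wf d t := by
        have hgC : |g t| ≤ C := by
          have := hC t (by rw [Set.uIcc_of_le (by linarith [hs0 hd])]; exact ht')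
          rwa [Real.norm_eq_abs] at this
        exact mul_le_mul hgC (Wf_le_wf hd ht') (Wf_nonneg hd ht')
          (le_trans (abs_nonneg _) hgC)
    _ ≤ ‖C * wf d t‖ := le_abs_self _

-- ============ inner product API ============

def inn (d : ℕ) (p q : Polynomial ℝ) : ℝ :=
  ∫ t in (-Real.sqrt d)..(Real.sqrt d), p.eval t * q.eval t * xiDensity d t

lemma inn_integrable (hd : 2 ≤ d) (hP : IsGegenbauer d P) (p q : Polynomial ℝ) :
    IntervalIntegrable (fun t => p.eval t * q.eval t * xiDensity d t) volume
      (-Real.sqrt d) (Real.sqrt d) := by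
  have := cont_mul_xi_int hd hP (g := fun t => p.eval t * q.eval t)
    ((p.continuous_aeval.mul q.continuous_aeval))
  simpa [mul_assoc] using this

lemma inn_P (hP : IsGegenbauer d P) (i j : ℕ) :
    inn d (P i) (P j) = if i = j then 1 else 0 := hP.2.1 i j

lemma inn_comm (p q : Polynomial ℝ) : inn d p q = inn d q p := by
  unfold inn
  congr 1
  ext t
  ring

lemma inn_C_mul_left (p q : Polynomial ℝ) (a : ℝ) :
    inn d (C a * p) q = a * inn d p q := by
  unfold inn
  rw [← intervalIntegral.integral_const_mul]
  congr 1
  ext t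
  simp
  ring

lemma inn_sum_left (hd : 2 ≤ d) (hP : IsGegenbauer d P) (F : Finset ℕ) (f : ℕ → Polynomial ℝ)
    (q : Polynomial ℝ) :
    inn d (∑ i ∈ F, f i) q = ∑ i ∈ F, inn d (f i) q := by
  unfold inn
  rw [← intervalIntegral.integral_finset_sum (fun i _ => inn_integrable hd hP (f i) q)]
  congr 1
  ext t
  rw [Polynomial.eval_finset_sum, Finset.sum_mul, Finset.sum_mul]

lemma inn_add_left (hd : 2 ≤ d) (hP : IsGegenbauer d P) (p p' q : Polynomial ℝ) :
    inn d (p + p') q = inn d p q + inn d p' q := by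
  unfold inn
  rw [← intervalIntegral.integral_add (inn_integrable hd hP p q) (inn_integrable hd hP p' q)]
  congr 1
  ext t
  simp
  ring

-- ============ spanning ============

lemma exists_rep (hd : 2 ≤ d) (hP : IsGegenbauer d P) :
    ∀ (m : ℕ) (q : Polynomial ℝ), q.natDegree ≤ m →
      ∃ c : ℕ → ℝ, q = ∑ j ∈ Finset.range (m+1), C (c j) * P j := by
  intro m
  induction m with
  | zero =>
    intro q hq
    refine ⟨fun _ => q.coeff 0, ?_⟩
    rw [Finset.sum_range_one, P_zero hd hP, mul_one]
    exact Polynomial.eq_C_of_natDegree_le_zero hq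
  | succ m ih =>
    intro q hq
    have hlc : (P (m+1)).coeff (m+1) ≠ 0 := by
      have hne : P (m+1) ≠ 0 := by
        intro h
        have := hP.1 (m+1)
        rw [h] at this
        simp at this
      have := Polynomial.leadingCoeff_ne_zero.mpr hne
      rwa [Polynomial.leadingCoeff, hP.1 (m+1)] at this
    set a := q.coeff (m+1) / (P (m+1)).coeff (m+1) with ha
    have hr : (q - C a * P (m+1)).natDegree ≤ m := by
      apply Polynomial.natDegree_le_iff_coeff_eq_zero.mpr
      intro j hj
      rw [Polynomial.coeff_sub, Polynomial.coeff_C_mul]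
      rcases eq_or_lt_of_le (Nat.succ_le_of_lt hj) with h | h
      · rw [← h, ha]
        field_simp
        ring
      · have h1 : q.coeff j = 0 := Polynomial.coeff_eq_zero_of_natDegree_lt (lt_of_le_of_lt hq h)
        have h2 : (P (m+1)).coeff j = 0 := by
          apply Polynomial.coeff_eq_zero_of_natDegree_lt
          rw [hP.1 (m+1)]
          exact h
        rw [h1, h2]
        ring
    obtain ⟨c, hc⟩ := ih _ hr
    refine ⟨fun j => if j = m+1 then a else c j, ?_⟩
    rw [Finset.sum_range_succ]
    have : ∑ j ∈ Finset.range (m+1), C (if j = m+1 then a else c j) * P j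
        = ∑ j ∈ Finset.range (m+1), C (c j) * P j := by
      apply Finset.sum_congr rfl
      intro j hj
      rw [if_neg (by simp at hj; omega)]
    rw [this]
    simp only [↓reduceIte]
    rw [← hc]
    ring

lemma inn_rep (hd : 2 ≤ d) (hP : IsGegenbauer d P) (m : ℕ) (c : ℕ → ℝ) (i : ℕ) (hi : i ≤ m) :
    inn d (∑ j ∈ Finset.range (m+1), C (c j) * P j) (P i) = c i := by
  rw [inn_sum_left hd hP]
  have : ∀ j ∈ Finset.range (m+1), inn d (C (c j) * P j) (P i)
      = if j = i then c j else 0 := by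
    intro j _
    rw [inn_C_mul_left, inn_P hP]
    split_ifs with h
    · simp
    · simp
  rw [Finset.sum_congr rfl this, Finset.sum_ite_eq' (Finset.range (m+1)) i c]
  rw [if_pos (Finset.mem_range.mpr (by omega))]

lemma ortho_zero (hd : 2 ≤ d) (hP : IsGegenbauer d P) (m : ℕ) (q : Polynomial ℝ)
    (hq : q.natDegree ≤ m) (h : ∀ i, i ≤ m → inn d q (P i) = 0) : q = 0 := by
  obtain ⟨c, hc⟩ := exists_rep hd hP m q hq
  have hci : ∀ i, i ≤ m → c i = 0 := by
    intro i hi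
    have := h i hi
    rw [hc, inn_rep hd hP m c i hi] at this
    exact this
  rw [hc]
  apply Finset.sum_eq_zero
  intro j hj
  rw [hci j (by simp at hj; omega)]
  simp

-- ============ operator and IBP ============

def Lop (d : ℕ) (q : Polynomial ℝ) : Polynomial ℝ :=
  (C (d:ℝ) - X^2) * q.derivative.derivative - C ((d:ℝ)-1) * X * q.derivative

lemma eval_Lop (d : ℕ) (q : Polynomial ℝ) (t : ℝ) :
    (Lop d q).eval t = ((d:ℝ) - t^2) * q.derivative.derivative.eval t
      - ((d:ℝ)-1) * t * q.derivative.eval t := by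
  simp [Lop]

lemma Lop_coeff (d : ℕ) (q : Polynomial ℝ) (j : ℕ) (hj : 1 ≤ j) :
    (Lop d q).coeff j = (d:ℝ) * ((j:ℝ)+1) * ((j:ℝ)+2) * q.coeff (j+2)
      - ((j:ℝ) * ((j:ℝ) + (d:ℝ) - 2)) * q.coeff j := by
  have hder : ∀ (r : Polynomial ℝ) (n : ℕ), r.derivative.coeff n = r.coeff (n+1) * ((n:ℝ)+1) :=
    fun r n => by simpa using r.coeff_derivative n
  rcases j with _ | j; · omega
  rcases j with _ | j
  · simp only [Lop, coeff_sub, sub_mul, coeff_C_mul, mul_assoc, coeff_X_mul,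
      coeff_X_pow_mul', hder]
    norm_num
    ring
  · simp only [Lop, coeff_sub, sub_mul, coeff_C_mul, mul_assoc, coeff_X_mul,
      coeff_X_pow_mul', hder]
    norm_num
    push_cast
    ring

lemma ibp (hd : 2 ≤ d) (hP : IsGegenbauer d P) (p q : Polynomial ℝ) :
    ∫ t in (-Real.sqrt d)..(Real.sqrt d), (Lop d p).eval t * q.eval t * wf d t
      = -(d:ℝ) * ∫ t in (-Real.sqrt d)..(Real.sqrt d),
          p.derivative.eval t * q.derivative.eval t * Wf d t := by
  have hdne : (d:ℝ) ≠ 0 := (hd0 hd).ne'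
  have h2d : (2:ℝ) ≤ d := by exact_mod_cast hd
  set s : ℝ := Real.sqrt d with hs
  have hss : 0 < s := hs0 hd
  set F : ℝ → ℝ := fun t => p.derivative.eval t * q.eval t * ((d:ℝ) * Wf d t) with hF
  set A : ℝ → ℝ := fun t => (Lop d p).eval t * q.eval t * wf d t with hA
  set B : ℝ → ℝ := fun t =>
    ((d:ℝ) * (p.derivative.eval t * q.derivative.eval t)) * Wf d t with hB
  have hAint : IntervalIntegrable A volume (-s) s :=
    cont_mul_wf_int hd hP (((Lop d p).continuous_aeval).mul q.continuous_aeval)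
  have hBint : IntervalIntegrable B volume (-s) s :=
    cont_mul_Wf_int hd hP
      (continuous_const.mul ((p.derivative.continuous_aeval).mul q.derivative.continuous_aeval))
  have hderiv : ∀ t ∈ Set.Ioo (-s) s, HasDerivAt F (A t + B t) t := by
    intro t ht
    have hb : 0 < 1 - t^2/(d:ℝ) := base_pos hd ht
    have hbase : HasDerivAt (fun t : ℝ => 1 - t^2/(d:ℝ)) (-(2*t/d)) t := by
      have h := (hasDerivAt_pow 2 t).div_const (d:ℝ)
      have h2 := (hasDerivAt_const t (1:ℝ)).sub h
      refine h2.congr_deriv ?_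
      push_cast
      ring
    have hW : HasDerivAt (fun x => Wf d x)
        (((d:ℝ)-1)/2 * wf d t * (-(2*t/d))) t := by
      have h := hbase.rpow_const (p := ((d:ℝ)-1)/2) (Or.inl hb.ne')
      have hexp : ((d:ℝ)-1)/2 - 1 = ((d:ℝ)-3)/2 := by ring
      rw [hexp] at h
      unfold wf
      convert h using 1
      · rfl
      ring
    have hFd : HasDerivAt F
        ((p.derivative.derivative.eval t * q.eval t
          + p.derivative.eval t * q.derivative.eval t) * ((d:ℝ) * Wf d t)
         + p.derivative.eval t * q.eval t
            * ((d:ℝ) * (((d:ℝ)-1)/2 * wf d t * (-(2*t/d))))) t :=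
      ((p.derivative.hasDerivAt t).mul (q.hasDerivAt t)).mul (hW.const_mul (d:ℝ))
    have hWw : Wf d t = (1 - t^2/d) * wf d t := by
      unfold Wf wf
      have he : ((d:ℝ)-1)/2 = ((d:ℝ)-3)/2 + 1 := by ring
      rw [he, Real.rpow_add_one hb.ne']
      ring
    have heq : A t + B t
        = (p.derivative.derivative.eval t * q.eval t
          + p.derivative.eval t * q.derivative.eval t) * ((d:ℝ) * Wf d t)
         + p.derivative.eval t * q.eval t
            * ((d:ℝ) * (((d:ℝ)-1)/2 * wf d t * (-(2*t/d)))) := by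
      rw [hA, hB]
      simp only []
      rw [eval_Lop, hWw]
      -- now all in terms of wf
      field_simp
      ring
    rw [heq]
    exact hFd
  have hGint : IntervalIntegrable (fun t => A t + B t) volume (-s) s := hAint.add hBint
  have hFcont : Continuous F :=
    ((p.derivative.continuous_aeval).mul q.continuous_aeval).mul
      (continuous_const.mul (continuous_Wf hd))
  have hFa : F (-s) = 0 := by
    rw [hF]
    simp only []
    rw [Wf_endpoint hd (by rw [neg_pow]; simp [hs, Real.sq_sqrt (hd0 hd).le])]
    ring
  have hFb : F s = 0 := by
    rw [hF]
    simp only []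
    rw [Wf_endpoint hd (by rw [hs]; exact Real.sq_sqrt (hd0 hd).le)]
    ring
  have hmain : ∫ t in (-s)..s, (A t + B t) = 0 - 0 := by
    apply intervalIntegral.integral_eq_sub_of_hasDerivAt_of_tendsto (by linarith)
      hderiv hGint
    · rw [← hFa]
      exact (hFcont.tendsto _).mono_left nhdsWithin_le_nhds
    · rw [← hFb]
      exact (hFcont.tendsto _).mono_left nhdsWithin_le_nhds
  rw [intervalIntegral.integral_add hAint hBint] at hmain
  have hBval : ∫ t in (-s)..s, B t
      = (d:ℝ) * ∫ t in (-s)..s, p.derivative.eval t * q.derivative.eval t * Wf d t := by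
    rw [← intervalIntegral.integral_const_mul]
    congr 1
    ext t
    rw [hB]
    ring
  have : ∫ t in (-s)..s, A t
      = -(d:ℝ) * ∫ t in (-s)..s, p.derivative.eval t * q.derivative.eval t * Wf d t := by
    rw [hBval] at hmain
    linarith
  exact this

-- ============ self-adjointness and eigenvalues ============

lemma inn_eq_wf (p q : Polynomial ℝ) :
    inn d p q = cxi d * ∫ t in (-Real.sqrt d)..(Real.sqrt d),
      p.eval t * q.eval t * wf d t := by
  unfold inn
  rw [← intervalIntegral.integral_const_mul]
  congr 1
  ext t
  show p.eval t * q.eval t * (cxi d * wf d t) = _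
  ring

lemma inn_selfadj (hd : 2 ≤ d) (hP : IsGegenbauer d P) (p q : Polynomial ℝ) :
    inn d (Lop d p) q = inn d p (Lop d q) := by
  rw [inn_comm (d := d) p (Lop d q), inn_eq_wf, inn_eq_wf, ibp hd hP p q, ibp hd hP q p]
  congr 2
  · congr 1
    ext t
    ring

lemma eigen (hd : 2 ≤ d) (hP : IsGegenbauer d P) :
    ∀ l, Lop d (P l) = C (-((l:ℝ) * ((l:ℝ) + (d:ℝ) - 2))) * P l := by
  intro l
  induction l using Nat.strong_induction_on with
  | _ l ih =>
  rcases Nat.eq_zero_or_pos l with rfl | hl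
  · rw [P_zero hd hP]
    unfold Lop
    norm_num
  · set μ : ℝ := (l:ℝ) * ((l:ℝ) + (d:ℝ) - 2) with hμ
    have hdeg := hP.1 l
    have hrdeg : (Lop d (P l) + C μ * P l).natDegree ≤ l - 1 := by
      apply Polynomial.natDegree_le_iff_coeff_eq_zero.mpr
      intro j hj
      have hjl : l ≤ j := by omega
      have hj1 : 1 ≤ j := by omega
      rw [Polynomial.coeff_add, Polynomial.coeff_C_mul, Lop_coeff d (P l) j hj1]
      have hc2 : (P l).coeff (j+2) = 0 :=
        Polynomial.coeff_eq_zero_of_natDegree_lt (by rw [hdeg]; omega)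
      rcases eq_or_lt_of_le hjl with h | h
      · subst h
        rw [hc2, hμ]
        ring
      · have hcj : (P l).coeff j = 0 :=
          Polynomial.coeff_eq_zero_of_natDegree_lt (by rw [hdeg]; exact h)
        rw [hc2, hcj]
        ring
    have hinn : ∀ i, i ≤ l - 1 → inn d (Lop d (P l) + C μ * P l) (P i) = 0 := by
      intro i hi
      have hil : i < l := by omega
      rw [inn_add_left hd hP, inn_C_mul_left, inn_P hP]
      rw [if_neg (by omega)]
      rw [inn_selfadj hd hP, ih i hil]
      rw [inn_comm (d := d), inn_C_mul_left, inn_P hP, if_neg (by omega)]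
      ring
    have hr0 : Lop d (P l) + C μ * P l = 0 := ortho_zero hd hP (l-1) _ hrdeg hinn
    have : Lop d (P l) = -(C μ * P l) := by linear_combination hr0
    rw [this, hμ, map_neg, neg_mul]

-- ============ energy identity ============

lemma Lop_C_mul (d : ℕ) (a : ℝ) (p : Polynomial ℝ) :
    Lop d (C a * p) = C a * Lop d p := by
  unfold Lop
  rw [Polynomial.derivative_C_mul, Polynomial.derivative_C_mul]
  ring

lemma Lop_sum (d : ℕ) (F : Finset ℕ) (f : ℕ → Polynomial ℝ) :
    Lop d (∑ i ∈ F, f i) = ∑ i ∈ F, Lop d (f i) := by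
  unfold Lop
  rw [Polynomial.derivative_sum]
  simp only [Polynomial.derivative_sum]
  rw [Finset.mul_sum, Finset.mul_sum, ← Finset.sum_sub_distrib]

lemma energy_eq (hd : 2 ≤ d) (hP : IsGegenbauer d P) (k : ℕ) (φc : ℕ → ℝ) (φ : Polynomial ℝ)
    (hφ : φ = ∑ l ∈ Finset.range (k + 1), C (φc l) * P l) :
    ∑ l ∈ Finset.range (k+1), φc l ^ 2 * ((l:ℝ) * ((l:ℝ) + (d:ℝ) - 2))
      = cxi d * d * ∫ t in (-Real.sqrt d)..(Real.sqrt d),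
          φ.derivative.eval t * φ.derivative.eval t * Wf d t := by
  have h1 : inn d (Lop d φ) φ
      = - ∑ l ∈ Finset.range (k+1), φc l ^ 2 * ((l:ℝ) * ((l:ℝ) + (d:ℝ) - 2)) := by
    rw [hφ, Lop_sum, inn_sum_left hd hP]
    have : ∀ l ∈ Finset.range (k+1),
        inn d (Lop d (C (φc l) * P l)) (∑ j ∈ Finset.range (k + 1), C (φc j) * P j)
        = -(φc l ^ 2 * ((l:ℝ) * ((l:ℝ) + (d:ℝ) - 2))) := by
      intro l hl
      rw [Lop_C_mul, eigen hd hP l, ← mul_assoc, ← C_mul, inn_C_mul_left]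
      rw [inn_comm (d := d), inn_rep hd hP k φc l (by simp at hl; omega)]
      ring
    rw [Finset.sum_congr rfl this, ← Finset.sum_neg_distrib]
  have h2 : inn d (Lop d φ) φ
      = cxi d * (-(d:ℝ) * ∫ t in (-Real.sqrt d)..(Real.sqrt d),
          φ.derivative.eval t * φ.derivative.eval t * Wf d t) := by
    rw [inn_eq_wf, ibp hd hP φ φ]
  rw [h2] at h1
  have := h1.symm
  linarith [this]

lemma const_eq (hd : 2 ≤ d) :
    cxi d * d = Real.Gamma ((d:ℝ)/2) / Real.Gamma (((d:ℝ)-1)/2)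
      * Real.sqrt ((d:ℝ)/Real.pi) := by
  have hd' : (0:ℝ) < d := hd0 hd
  have hπ := Real.pi_pos
  have hb : 0 < Real.Gamma (((d:ℝ)-1)/2) := by
    have h2 : (2:ℝ) ≤ d := by exact_mod_cast hd
    exact Real.Gamma_pos_of_pos (by linarith)
  unfold cxi
  rw [Real.sqrt_mul hπ.le, Real.sqrt_div hd'.le]
  set a := Real.Gamma ((d:ℝ)/2) with ha
  set b := Real.Gamma (((d:ℝ)-1)/2) with hbb
  set sp := Real.sqrt Real.pi with hsp
  set sd := Real.sqrt (d:ℝ) with hsdd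
  have hsd : sd ≠ 0 := (hs0 hd).ne'
  have hsπ : sp ≠ 0 := (Real.sqrt_pos.mpr hπ).ne'
  have hdd : (d:ℝ) = sd * sd := (Real.mul_self_sqrt hd'.le).symm
  rw [hdd]
  field_simp

-- ============ part 2: gaussian bound ============

lemma exp_half_le_two : Real.exp (1/2) ≤ 2 := by
  nlinarith [Real.exp_one_lt_d9, Real.exp_pos (1/2 : ℝ),
    (by rw [← Real.exp_add]; norm_num : Real.exp (1/2) * Real.exp (1/2) = Real.exp 1)]

lemma gamma_ratio (hd : 2 ≤ d) :
    Real.Gamma ((d:ℝ)/2) ≤ Real.sqrt (((d:ℝ)-1)/2) * Real.Gamma (((d:ℝ)-1)/2) := by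
  have h2 : (2:ℝ) ≤ d := by exact_mod_cast hd
  set x : ℝ := ((d:ℝ)-1)/2 with hx
  have hx0 : 0 < x := by rw [hx]; linarith
  have hkey := Real.convexOn_log_Gamma.2 (Set.mem_Ioi.mpr hx0)
    (Set.mem_Ioi.mpr (by linarith : (0:ℝ) < x + 1))
    (by norm_num : (0:ℝ) ≤ 1/2) (by norm_num : (0:ℝ) ≤ 1/2) (by norm_num)
  have hmid : (1/2 : ℝ) • x + (1/2 : ℝ) • (x + 1) = (d:ℝ)/2 := by
    simp only [smul_eq_mul]; rw [hx]; ring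
  rw [hmid] at hkey
  simp only [Function.comp_apply, smul_eq_mul] at hkey
  have hgx : 0 < Real.Gamma x := Real.Gamma_pos_of_pos hx0
  have hgd : 0 < Real.Gamma ((d:ℝ)/2) := Real.Gamma_pos_of_pos (by linarith)
  have hG1 : Real.Gamma (x + 1) = x * Real.Gamma x := Real.Gamma_add_one hx0.ne'
  rw [hG1, Real.log_mul hx0.ne' hgx.ne'] at hkey
  have hrhs : Real.exp (1/2 * Real.log (Real.Gamma x)
      + 1/2 * (Real.log x + Real.log (Real.Gamma x)))
      = Real.sqrt x * Real.Gamma x := by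
    have h1 : 1/2 * Real.log (Real.Gamma x) + 1/2 * (Real.log x + Real.log (Real.Gamma x))
        = Real.log (Real.Gamma x) + Real.log x * (1/2) := by ring
    rw [h1, Real.exp_add, Real.exp_log hgx, ← Real.rpow_def_of_pos hx0,
      Real.sqrt_eq_rpow]
    norm_num
    ring
  calc Real.Gamma ((d:ℝ)/2) = Real.exp (Real.log (Real.Gamma ((d:ℝ)/2))) :=
        (Real.exp_log hgd).symm
  _ ≤ Real.exp (1/2 * Real.log (Real.Gamma x)
      + 1/2 * (Real.log x + Real.log (Real.Gamma x))) := Real.exp_le_exp.mpr hkey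
  _ = Real.sqrt x * Real.Gamma x := hrhs

lemma cxi_d_le (hd : 2 ≤ d) :
    cxi d * d ≤ Real.sqrt ((d:ℝ)*((d:ℝ)-1)/(2*Real.pi)) := by
  have h2 : (2:ℝ) ≤ d := by exact_mod_cast hd
  have hb : 0 < Real.Gamma (((d:ℝ)-1)/2) := Real.Gamma_pos_of_pos (by linarith)
  have hratio : Real.Gamma ((d:ℝ)/2) / Real.Gamma (((d:ℝ)-1)/2)
      ≤ Real.sqrt (((d:ℝ)-1)/2) := by
    rw [div_le_iff₀ hb]
    exact gamma_ratio hd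
  rw [const_eq hd]
  calc Real.Gamma ((d:ℝ)/2) / Real.Gamma (((d:ℝ)-1)/2) * Real.sqrt ((d:ℝ)/Real.pi)
      ≤ Real.sqrt (((d:ℝ)-1)/2) * Real.sqrt ((d:ℝ)/Real.pi) :=
        mul_le_mul_of_nonneg_right hratio (Real.sqrt_nonneg _)
  _ = Real.sqrt ((((d:ℝ)-1)/2) * ((d:ℝ)/Real.pi)) := (Real.sqrt_mul (by linarith) _).symm
  _ = Real.sqrt ((d:ℝ)*((d:ℝ)-1)/(2*Real.pi)) := by
      congr 1
      ring

lemma pdf_eq (t : ℝ) : ProbabilityTheory.gaussianPDFReal 0 1 t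
    = (Real.sqrt (2*Real.pi))⁻¹ * Real.exp (-(t^2/2)) := by
  rw [ProbabilityTheory.gaussianPDFReal]
  norm_num [neg_div]

lemma pointwise_bound (hd : 2 ≤ d) {t : ℝ} (ht : t ∈ Set.Icc (-Real.sqrt d) (Real.sqrt d)) :
    cxi d * d * Wf d t
      ≤ 2 * Real.sqrt ((d:ℝ)*((d:ℝ)-1)) * ProbabilityTheory.gaussianPDFReal 0 1 t := by
  have h2 : (2:ℝ) ≤ d := by exact_mod_cast hd
  have hd' : (0:ℝ) < d := hd0 hd
  have hbase0 : 0 ≤ 1 - t^2/(d:ℝ) := (base_mem hd ht).1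
  have ht2 : t^2 ≤ (d:ℝ) := by
    by_contra hc
    push_neg at hc
    have : t^2/(d:ℝ) > 1 := (one_lt_div hd').mpr hc
    linarith
  have hcd0 : 0 < cxi d * d := mul_pos (cxi_pos hd) hd'
  -- step 1 : Wf ≤ exp(1/2) * exp(-(t^2/2))
  have hW : Wf d t ≤ Real.exp (1/2) * Real.exp (-(t^2/2)) := by
    have he1 : (0:ℝ) ≤ ((d:ℝ)-1)/2 := by linarith
    have h1 : 1 - t^2/(d:ℝ) ≤ Real.exp (-(t^2/d)) := by
      have := Real.add_one_le_exp (-(t^2/(d:ℝ)))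
      linarith
    have h2' : Wf d t ≤ Real.exp (-(t^2/d)) ^ (((d:ℝ)-1)/2) := by
      unfold Wf
      exact Real.rpow_le_rpow hbase0 h1 he1
    rw [← Real.exp_mul] at h2'
    have h4 : -(t^2/(d:ℝ)) * (((d:ℝ)-1)/2) = t^2/(2*(d:ℝ)) + (-(t^2/2)) := by
      field_simp
      ring
    rw [h4, Real.exp_add] at h2'
    have h5 : Real.exp (t^2/(2*(d:ℝ))) ≤ Real.exp (1/2) := by
      apply Real.exp_le_exp.mpr
      rw [div_le_div_iff₀ (by linarith) (by norm_num)]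
      linarith
    calc Wf d t ≤ Real.exp (t^2/(2*(d:ℝ))) * Real.exp (-(t^2/2)) := h2'
    _ ≤ Real.exp (1/2) * Real.exp (-(t^2/2)) :=
        mul_le_mul_of_nonneg_right h5 (Real.exp_pos _).le
  -- step 2 : constant bound
  have hco : cxi d * d * Real.exp (1/2)
      ≤ Real.sqrt ((d:ℝ)*((d:ℝ)-1)) / Real.sqrt (2*Real.pi) * 2 := by
    have h3 : Real.sqrt ((d:ℝ)*((d:ℝ)-1)/(2*Real.pi))
        = Real.sqrt ((d:ℝ)*((d:ℝ)-1)) / Real.sqrt (2*Real.pi) :=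
      Real.sqrt_div (by nlinarith) _
    calc cxi d * d * Real.exp (1/2)
        ≤ Real.sqrt ((d:ℝ)*((d:ℝ)-1)/(2*Real.pi)) * 2 :=
          mul_le_mul (cxi_d_le hd) exp_half_le_two (Real.exp_pos _).le (Real.sqrt_nonneg _)
    _ = Real.sqrt ((d:ℝ)*((d:ℝ)-1)) / Real.sqrt (2*Real.pi) * 2 := by rw [h3]
  calc cxi d * d * Wf d t
      ≤ cxi d * d * (Real.exp (1/2) * Real.exp (-(t^2/2))) :=
        mul_le_mul_of_nonneg_left hW hcd0.le
  _ = (cxi d * d * Real.exp (1/2)) * Real.exp (-(t^2/2)) := by ring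
  _ ≤ (Real.sqrt ((d:ℝ)*((d:ℝ)-1)) / Real.sqrt (2*Real.pi) * 2) * Real.exp (-(t^2/2)) :=
        mul_le_mul_of_nonneg_right hco (Real.exp_pos _).le
  _ = 2 * Real.sqrt ((d:ℝ)*((d:ℝ)-1))
        * ((Real.sqrt (2*Real.pi))⁻¹ * Real.exp (-(t^2/2))) := by ring
  _ = 2 * Real.sqrt ((d:ℝ)*((d:ℝ)-1)) * ProbabilityTheory.gaussianPDFReal 0 1 t := by
        rw [pdf_eq]

lemma pdf_continuous : Continuous (ProbabilityTheory.gaussianPDFReal 0 1) := by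
  rw [ProbabilityTheory.gaussianPDFReal_def]
  fun_prop

lemma poly_pdf_integrable (p : Polynomial ℝ) :
    Integrable (fun x => p.eval x * ProbabilityTheory.gaussianPDFReal 0 1 x) := by
  have hmono : ∀ n : ℕ, Integrable (fun x : ℝ => x^n * Real.exp (-((1:ℝ)/2)*x^2)) := by
    intro n
    have h := integrable_rpow_mul_exp_neg_mul_sq (b := (1/2:ℝ)) (by norm_num)
      (s := (n:ℝ)) (lt_of_lt_of_le (by norm_num) (Nat.cast_nonneg n))
    simpa [Real.rpow_natCast] using h
  induction p using Polynomial.induction_on' with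
  | add p q hp hq =>
    have := hp.add hq
    apply this.congr
    filter_upwards with x
    simp [Polynomial.eval_add]
    ring
  | monomial n a =>
    have h := (hmono n).const_mul (a * (Real.sqrt (2*Real.pi))⁻¹)
    apply h.congr
    filter_upwards with x
    rw [Polynomial.eval_monomial, pdf_eq]
    rw [show -(x^2/2) = -((1:ℝ)/2)*x^2 by ring]
    ring

lemma integral_gauss_eq (p : Polynomial ℝ) :
    (∫ t, p.eval t ∂(ProbabilityTheory.gaussianReal 0 1))
      = ∫ t, p.eval t * ProbabilityTheory.gaussianPDFReal 0 1 t := by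
  rw [ProbabilityTheory.gaussianReal_of_var_ne_zero 0 one_ne_zero]
  have hmeas : Measurable fun x => (ProbabilityTheory.gaussianPDFReal 0 1 x).toNNReal :=
    (ProbabilityTheory.measurable_gaussianPDFReal 0 1).real_toNNReal
  have hpdf : (ProbabilityTheory.gaussianPDF 0 1)
      = fun x => ((ProbabilityTheory.gaussianPDFReal 0 1 x).toNNReal : ℝ≥0∞) := rfl
  rw [hpdf, integral_withDensity_eq_integral_smul hmeas]
  congr 1
  ext x
  rw [NNReal.smul_def, Real.coe_toNNReal _ (ProbabilityTheory.gaussianPDFReal_nonneg 0 1 x)]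
  rw [smul_eq_mul]
  ring

lemma part2 (hd : 2 ≤ d) (hP : IsGegenbauer d P) (φ : Polynomial ℝ) :
    cxi d * (d:ℝ) * (∫ t in (-Real.sqrt d)..(Real.sqrt d),
        φ.derivative.eval t * φ.derivative.eval t * Wf d t)
      ≤ 2 * Real.sqrt ((d:ℝ) * ((d:ℝ) - 1))
          * ∫ t, (φ.derivative.eval t) ^ 2 ∂(ProbabilityTheory.gaussianReal 0 1) := by
  have h2 : (2:ℝ) ≤ d := by exact_mod_cast hd
  set s : ℝ := Real.sqrt d with hs
  have hss : 0 < s := hs0 hd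
  set q : Polynomial ℝ := φ.derivative * φ.derivative with hq
  have hqeval : ∀ t, q.eval t = φ.derivative.eval t * φ.derivative.eval t := by
    intro t; rw [hq, Polynomial.eval_mul]
  have hqnn : ∀ t, 0 ≤ q.eval t := fun t => by rw [hqeval]; exact mul_self_nonneg _
  have K0 : 0 ≤ 2 * Real.sqrt ((d:ℝ) * ((d:ℝ) - 1)) := by positivity
  set K : ℝ := 2 * Real.sqrt ((d:ℝ) * ((d:ℝ) - 1)) with hK
  -- rewrite lhs integral with q
  have hlhs : (∫ t in (-s)..s, φ.derivative.eval t * φ.derivative.eval t * Wf d t)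
      = ∫ t in (-s)..s, q.eval t * Wf d t := by
    congr 1; ext t; rw [hqeval]
  rw [hlhs]
  have int1 : IntervalIntegrable (fun t => cxi d * (d:ℝ) * (q.eval t * Wf d t))
      volume (-s) s := by
    have h := cont_mul_Wf_int hd hP (g := fun t => cxi d * (d:ℝ) * q.eval t)
      (continuous_const.mul q.continuous_aeval)
    simpa [mul_assoc] using h
  have int2 : IntervalIntegrable
      (fun t => K * (q.eval t * ProbabilityTheory.gaussianPDFReal 0 1 t)) volume (-s) s :=
    (continuous_const.mul (q.continuous_aeval.mul pdf_continuous)).intervalIntegrable _ _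
  have hmono : (∫ t in (-s)..s, cxi d * (d:ℝ) * (q.eval t * Wf d t))
      ≤ ∫ t in (-s)..s, K * (q.eval t * ProbabilityTheory.gaussianPDFReal 0 1 t) := by
    apply intervalIntegral.integral_mono_on (by linarith) int1 int2
    intro t ht
    have hpt := pointwise_bound hd ht
    have hg := hqnn t
    calc cxi d * (d:ℝ) * (q.eval t * Wf d t)
        = q.eval t * (cxi d * (d:ℝ) * Wf d t) := by ring
    _ ≤ q.eval t * (K * ProbabilityTheory.gaussianPDFReal 0 1 t) :=
        mul_le_mul_of_nonneg_left hpt hg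
    _ = K * (q.eval t * ProbabilityTheory.gaussianPDFReal 0 1 t) := by ring
  have hKout : (∫ t in (-s)..s, K * (q.eval t * ProbabilityTheory.gaussianPDFReal 0 1 t))
      = K * ∫ t in (-s)..s, q.eval t * ProbabilityTheory.gaussianPDFReal 0 1 t :=
    intervalIntegral.integral_const_mul _ _
  have hsub : (∫ t in (-s)..s, q.eval t * ProbabilityTheory.gaussianPDFReal 0 1 t)
      ≤ ∫ t, q.eval t * ProbabilityTheory.gaussianPDFReal 0 1 t := by
    rw [intervalIntegral.integral_of_le (by linarith)]
    apply MeasureTheory.setIntegral_le_integral (poly_pdf_integrable q)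
    filter_upwards with t
    exact mul_nonneg (hqnn t) (ProbabilityTheory.gaussianPDFReal_nonneg 0 1 t)
  have hgauss : (∫ t, q.eval t * ProbabilityTheory.gaussianPDFReal 0 1 t)
      = ∫ t, (φ.derivative.eval t) ^ 2 ∂(ProbabilityTheory.gaussianReal 0 1) := by
    rw [← integral_gauss_eq]
    congr 1
    ext t
    rw [hqeval]
    ring
  calc cxi d * (d:ℝ) * ∫ t in (-s)..s, q.eval t * Wf d t
      = ∫ t in (-s)..s, cxi d * (d:ℝ) * (q.eval t * Wf d t) := by
        rw [intervalIntegral.integral_const_mul]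
  _ ≤ ∫ t in (-s)..s, K * (q.eval t * ProbabilityTheory.gaussianPDFReal 0 1 t) := hmono
  _ = K * ∫ t in (-s)..s, q.eval t * ProbabilityTheory.gaussianPDFReal 0 1 t := hKout
  _ ≤ K * ∫ t, q.eval t * ProbabilityTheory.gaussianPDFReal 0 1 t :=
      mul_le_mul_of_nonneg_left hsub K0
  _ = K * ∫ t, (φ.derivative.eval t) ^ 2 ∂(ProbabilityTheory.gaussianReal 0 1) := by
      rw [hgauss]

end GegAux

/-- for a polynomial `φ = ∑_{l≤k} φ̂_l P_l`,
`∑_l φ̂_l² l(l+d−2) = (Γ(d/2)/Γ((d−1)/2)) √(d/π) ∫ φ'(t)² (1−t²/d)^{(d−1)/2} dt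
  ≤ 2√(d(d−1)) E[φ'(N(0,1))²]`. -/
theorem gegenbauer_energy_identity (d k : ℕ) (hd : 2 ≤ d)
    (P : ℕ → Polynomial ℝ) (hP : IsGegenbauer d P)
    (φ : Polynomial ℝ) (φc : ℕ → ℝ)
    (hφ : φ = ∑ l ∈ Finset.range (k + 1), Polynomial.C (φc l) * P l) :
    (∑ l ∈ Finset.range (k + 1), φc l ^ 2 * (l : ℝ) * ((l : ℝ) + (d : ℝ) - 2))
      = (Real.Gamma ((d : ℝ) / 2) / Real.Gamma (((d : ℝ) - 1) / 2))
          * Real.sqrt ((d : ℝ) / Real.pi)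
          * ∫ t in -Real.sqrt d..Real.sqrt d,
              (φ.derivative.eval t) ^ 2 * (1 - t ^ 2 / d) ^ (((d : ℝ) - 1) / 2) ∧
    (Real.Gamma ((d : ℝ) / 2) / Real.Gamma (((d : ℝ) - 1) / 2))
        * Real.sqrt ((d : ℝ) / Real.pi)
        * (∫ t in -Real.sqrt d..Real.sqrt d,
            (φ.derivative.eval t) ^ 2 * (1 - t ^ 2 / d) ^ (((d : ℝ) - 1) / 2))
      ≤ 2 * Real.sqrt ((d : ℝ) * ((d : ℝ) - 1))
          * ∫ t, (φ.derivative.eval t) ^ 2 ∂(ProbabilityTheory.gaussianReal 0 1) := by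
  have hsum : (∑ l ∈ Finset.range (k + 1), φc l ^ 2 * (l : ℝ) * ((l : ℝ) + (d : ℝ) - 2))
      = ∑ l ∈ Finset.range (k + 1), φc l ^ 2 * ((l : ℝ) * ((l : ℝ) + (d : ℝ) - 2)) := by
    apply Finset.sum_congr rfl
    intros
    ring
  have hintEq : (∫ t in -Real.sqrt d..Real.sqrt d,
      (φ.derivative.eval t) ^ 2 * (1 - t ^ 2 / d) ^ (((d : ℝ) - 1) / 2))
      = ∫ t in -Real.sqrt d..Real.sqrt d,
          φ.derivative.eval t * φ.derivative.eval t * GegAux.Wf d t := by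
    congr 1
    ext t
    show _ = φ.derivative.eval t * φ.derivative.eval t * ((1 - t^2/(d:ℝ)) ^ (((d:ℝ)-1)/2))
    ring
  constructor
  · rw [hsum, hintEq, ← GegAux.const_eq hd]
    exact GegAux.energy_eq hd hP k φc φ hφ
  · rw [hintEq, ← GegAux.const_eq hd]
    exact GegAux.part2 hd hP φ

end
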